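/- Let X be a hereditarily indecomposable Banach space, Y = [y] the closed span of a normalized basic sequence with constant 2, T : Y → X a bounded operator that is an isomorphism onto its image, and Z the closed span of another normalized block basic sequence in X. Then there exist a normalized block basic sequence (y'ᵢ) of (yᵢ) and a block basic sequence (zᵢ) in Z such that ∑ᵢ ‖T(y'ᵢ) - zᵢ‖ < ∞. -/

import Mathlib

open Filter Topology

noncomputable section

variable {E F : Type*}

def IsInfDimClosed [NormedAddCommGroup E] [NormedSpace ℂ E] (M : Submodule ℂ E) : Prop :=
  IsClosed (M : Set E) ∧ ¬ FiniteDimensional ℂ M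

def HI (E : Type*) [NormedAddCommGroup E] [NormedSpace ℂ E] : Prop :=
  ∀ M N : Submodule ℂ E, IsInfDimClosed M → IsInfDimClosed N → ∀ ε > 0,
    ∃ u ∈ M, ∃ v ∈ N, ‖u‖ = 1 ∧ ‖v‖ = 1 ∧ ‖u - v‖ ≤ ε

def StrictlySingular [NormedAddCommGroup E] [NormedSpace ℂ E]
    [NormedAddCommGroup F] [NormedSpace ℂ F] (S : E →L[ℂ] F) : Prop :=
  ∀ M : Submodule ℂ E, IsInfDimClosed M → ∀ c > 0, ∃ x ∈ M, ‖S x‖ < c * ‖x‖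

def IsNBasic2 [NormedAddCommGroup E] [NormedSpace ℂ E] (y : ℕ → E) : Prop :=
  (∀ i, ‖y i‖ = 1) ∧ ∀ (a : ℕ → ℂ) (m n : ℕ), m ≤ n →
    ‖∑ i ∈ Finset.range m, a i • y i‖ ≤ 2 * ‖∑ i ∈ Finset.range n, a i • y i‖

def IsBlockOf [NormedAddCommGroup E] [NormedSpace ℂ E] (w z : ℕ → E) : Prop :=
  ∃ (a : ℕ → ℂ) (F : ℕ → Finset ℕ), (∀ k, (F k).Nonempty) ∧
    (∀ k i j, i ∈ F k → j ∈ F (k+1) → i < j) ∧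
    (∀ k, w k = ∑ i ∈ F k, a i • z i) ∧ (∀ k, w k ≠ 0)

def IsNBlockOf [NormedAddCommGroup E] [NormedSpace ℂ E] (w z : ℕ → E) : Prop :=
  IsBlockOf w z ∧ ∀ k, ‖w k‖ = 1

def cSpan [NormedAddCommGroup E] [NormedSpace ℂ E] (y : ℕ → E) : Submodule ℂ E :=
  (Submodule.span ℂ (Set.range y)).topologicalClosure

def tailSpan [NormedAddCommGroup E] [NormedSpace ℂ E] (y : ℕ → E) (k : ℕ) : Submodule ℂ E :=
  cSpan (fun i => y (i + k))

theorem mem_cSpan [NormedAddCommGroup E] [NormedSpace ℂ E] (y : ℕ → E) (i : ℕ) :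
    y i ∈ cSpan y :=
  (Submodule.span ℂ (Set.range y)).le_topologicalClosure (Submodule.subset_span ⟨i, rfl⟩)

theorem tailSpan_le [NormedAddCommGroup E] [NormedSpace ℂ E] (y : ℕ → E) (k : ℕ) :
    tailSpan y k ≤ cSpan y :=
  Submodule.topologicalClosure_mono (Submodule.span_mono (by rintro _ ⟨i, rfl⟩; exact ⟨i + k, rfl⟩))

def inclCLM [NormedAddCommGroup E] [NormedSpace ℂ E] {M N : Submodule ℂ E} (h : M ≤ N) :
    M →L[ℂ] N :=
  LinearMap.mkContinuous (Submodule.inclusion h) 1 (by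
    intro x
    simp [Submodule.inclusion])

variable [NormedAddCommGroup E] [NormedSpace ℂ E]

theorem aux_coeff_bound {y : ℕ → E} (hy : IsNBasic2 y) (a : ℕ → ℂ) (n j : ℕ) (hj : j < n) :
    ‖a j‖ ≤ 4 * ‖∑ i ∈ Finset.range n, a i • y i‖ := by
  have h1 : ‖∑ i ∈ Finset.range (j+1), a i • y i‖ ≤ 2 * ‖∑ i ∈ Finset.range n, a i • y i‖ :=
    hy.2 a (j+1) n hj
  have h2 : ‖∑ i ∈ Finset.range j, a i • y i‖ ≤ 2 * ‖∑ i ∈ Finset.range n, a i • y i‖ :=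
    hy.2 a j n hj.le
  have key : a j • y j = (∑ i ∈ Finset.range (j+1), a i • y i) - ∑ i ∈ Finset.range j, a i • y i := by
    rw [Finset.sum_range_succ]; abel
  have : ‖a j • y j‖ ≤ 4 * ‖∑ i ∈ Finset.range n, a i • y i‖ := by
    rw [key]
    calc _ ≤ ‖∑ i ∈ Finset.range (j+1), a i • y i‖ + ‖∑ i ∈ Finset.range j, a i • y i‖ :=
          norm_sub_le _ _
      _ ≤ _ := by linarith
  rwa [norm_smul, hy.1 j, mul_one] at this

theorem aux_li {y : ℕ → E} (hy : IsNBasic2 y) : LinearIndependent ℂ y := by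
  rw [linearIndependent_iff']
  intro s g hsum j hj
  set n := (s.sup id) + 1 with hn
  have hsub : s ⊆ Finset.range n := by
    intro i hi
    exact Finset.mem_range.2 (Nat.lt_succ_of_le (Finset.le_sup (f := id) hi))
  set g' : ℕ → ℂ := fun i => if i ∈ s then g i else 0 with hg'
  have hsum' : ∑ i ∈ Finset.range n, g' i • y i = 0 := by
    rw [← hsum]
    rw [← Finset.sum_subset hsub (fun i _ hi => by
      simp only [hg']; rw [if_neg hi, zero_smul])]
    exact Finset.sum_congr rfl (fun i hi => by simp only [hg']; rw [if_pos hi])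
  have := aux_coeff_bound hy g' n j (Finset.mem_range.mp (hsub hj))
  rw [hsum', norm_zero, mul_zero] at this
  have : g' j = 0 := by simpa using norm_le_zero_iff.mp this
  simpa [hg', hj] using this

theorem aux_infdim {y : ℕ → E} (hy : IsNBasic2 y) (k : ℕ) :
    IsInfDimClosed (tailSpan y k) := by
  refine ⟨Submodule.isClosed_topologicalClosure _, fun hfd => ?_⟩
  have hli : LinearIndependent ℂ (fun i => y (i + k)) :=
    (aux_li hy).comp (· + k) (add_left_injective k)
  set v : ℕ → tailSpan y k := fun i => ⟨y (i + k), mem_cSpan _ i⟩ with hv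
  have hliv : LinearIndependent ℂ v := by
    apply LinearIndependent.of_comp (tailSpan y k).subtype
    exact hli
  haveI := hfd
  haveI := hliv.finite
  exact not_finite ℕ

theorem aux_approx (y : ℕ → E) (k : ℕ) (x : E) (hx : x ∈ tailSpan y k) (δ : ℝ) (hδ : 0 < δ) :
    ∃ (a : ℕ → ℂ) (F : Finset ℕ), (∀ i ∈ F, k ≤ i) ∧ ‖x - ∑ i ∈ F, a i • y i‖ < δ := by
  have hx' : x ∈ closure ((Submodule.span ℂ (Set.range (fun i => y (i + k)))) : Set E) := by
    rw [← Submodule.topologicalClosure_coe]; exact hx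
  rw [Metric.mem_closure_iff] at hx'
  obtain ⟨p, hp, hpd⟩ := hx' δ hδ
  obtain ⟨c, rfl⟩ := Finsupp.mem_span_range_iff_exists_finsupp.mp hp
  refine ⟨fun j => c (j - k), c.support.image (· + k), ?_, ?_⟩
  · intro i hi
    obtain ⟨j, _, rfl⟩ := Finset.mem_image.mp hi
    exact Nat.le_add_left k j
  · rw [Finset.sum_image (fun a _ b _ h => by omega)]
    have : ∑ i ∈ c.support, c (i + k - k) • y (i + k) = c.sum fun i a => a • y (i + k) := by
      rw [Finsupp.sum]
      exact Finset.sum_congr rfl fun i _ => by rw [Nat.add_sub_cancel]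
    rw [this, ← dist_eq_norm]
    exact hpd

theorem aux_key {X : Type*} [NormedAddCommGroup X] [NormedSpace ℂ X] [CompleteSpace X]
    (hX : HI X) (y : ℕ → X) (hy : IsNBasic2 y)
    (T : cSpan y →L[ℂ] X) (c : ℝ) (hc : 0 < c)
    (hT : ∀ u : cSpan y, c * ‖u‖ ≤ ‖T u‖)
    (z : ℕ → X) (hz : IsNBasic2 z) (n : ℕ) (ε : ℝ) (hε : 0 < ε) :
    ∃ m : ℕ, n < m ∧ ∃ (a b : ℕ → ℂ) (Fy Fz : Finset ℕ),
      Fy.Nonempty ∧ Fz.Nonempty ∧ (∀ i ∈ Fy, n ≤ i ∧ i < m) ∧ (∀ i ∈ Fz, n ≤ i ∧ i < m) ∧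
      ‖∑ i ∈ Fy, a i • y i‖ = 1 ∧ (∑ i ∈ Fz, b i • z i) ≠ 0 ∧
      ∀ hp : (∑ i ∈ Fy, a i • y i) ∈ cSpan y,
        ‖T ⟨∑ i ∈ Fy, a i • y i, hp⟩ - ∑ i ∈ Fz, b i • z i‖ ≤ ε := by
  -- norm of T is positive
  have hT0 : 0 < ‖T‖ := by
    have h1 : ‖(⟨y 0, mem_cSpan y 0⟩ : cSpan y)‖ = 1 := by
      show ‖y 0‖ = 1; exact hy.1 0
    have h2 := hT ⟨y 0, mem_cSpan y 0⟩
    have h3 := T.le_opNorm ⟨y 0, mem_cSpan y 0⟩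
    rw [h1] at h2 h3
    nlinarith
  set tt := ‖T‖ with htt
  -- restricted map
  set Sn : tailSpan y n →L[ℂ] X := T.comp (inclCLM (tailSpan_le y n)) with hSn
  have hincl : ∀ u : tailSpan y n, ((inclCLM (tailSpan_le y n)) u : X) = (u : X) := fun u => rfl
  have hSnval : ∀ u : tailSpan y n, Sn u = T ((inclCLM (tailSpan_le y n)) u) := fun u => rfl
  have hinclnorm : ∀ u : tailSpan y n, ‖(inclCLM (tailSpan_le y n)) u‖ = ‖u‖ := fun u => rfl
  have hSl : ∀ u : tailSpan y n, c * ‖u‖ ≤ ‖Sn u‖ := fun u => by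
    rw [hSnval, ← hinclnorm u]; exact hT _
  have hSup : ∀ u : tailSpan y n, ‖Sn u‖ ≤ tt * ‖u‖ := fun u => by
    rw [hSnval, ← hinclnorm u]; exact T.le_opNorm _
  haveI : CompleteSpace (tailSpan y n) :=
    (Submodule.isClosed_topologicalClosure _).isComplete.completeSpace_coe
  set M : Submodule ℂ X := LinearMap.range (Sn : tailSpan y n →ₗ[ℂ] X) with hM
  have hanti : AntilipschitzWith (c⁻¹.toNNReal) Sn := by
    apply AddMonoidHomClass.antilipschitz_of_bound
    intro x
    rw [Real.coe_toNNReal _ (by positivity)]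
    have := hSl x
    have h2 : c * ‖x‖ * c⁻¹ ≤ ‖Sn x‖ * c⁻¹ :=
      mul_le_mul_of_nonneg_right this (by positivity)
    calc ‖x‖ = c * ‖x‖ * c⁻¹ := by field_simp
      _ ≤ ‖Sn x‖ * c⁻¹ := h2
      _ = c⁻¹ * ‖Sn x‖ := mul_comm _ _
  have hMclosed : IsClosed (M : Set X) := by
    have : IsClosed (Set.range Sn) := hanti.isClosed_range Sn.uniformContinuous
    rw [hM]
    exact (LinearMap.coe_range (Sn : tailSpan y n →ₗ[ℂ] X)) ▸ this
  have hMinf : ¬ FiniteDimensional ℂ M := by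
    intro h
    have hinj : Function.Injective (Sn : tailSpan y n →ₗ[ℂ] X) := hanti.injective
    have e := LinearEquiv.ofInjective (Sn : tailSpan y n →ₗ[ℂ] X) hinj
    exact (aux_infdim hy n).2 (Module.Finite.equiv e.symm)
  -- parameters
  set ε₁ : ℝ := ε / (4 * tt) with hε₁def
  have hε₁ : 0 < ε₁ := by positivity
  set δ : ℝ := min (tt⁻¹ / 2) (min (1 / 2) (ε / (4 * tt * (tt + 1)))) with hδdef
  have hδ : 0 < δ := by
    apply lt_min (by positivity) (lt_min (by norm_num) (by positivity))
  have hδ1 : δ ≤ tt⁻¹ / 2 := min_le_left _ _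
  have hδ2 : δ ≤ 1 / 2 := le_trans (min_le_right _ _) (min_le_left _ _)
  have hδ3 : δ ≤ ε / (4 * tt * (tt + 1)) := le_trans (min_le_right _ _) (min_le_right _ _)
  -- apply HI
  obtain ⟨u, hu, v, hv, hun, hvn, huv⟩ :=
    hX M (tailSpan z n) ⟨hMclosed, hMinf⟩ (aux_infdim hz n) ε₁ hε₁
  obtain ⟨x, hxu⟩ := LinearMap.mem_range.mp hu
  have hxlow : tt⁻¹ ≤ ‖x‖ := by
    have h1 : ‖Sn x‖ ≤ tt * ‖x‖ := hSup x
    have hxu' : Sn x = u := hxu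
    rw [hxu', hun] at h1
    apply le_of_mul_le_mul_left _ hT0
    rw [mul_inv_cancel₀ hT0.ne']
    exact h1
  -- approximate
  obtain ⟨ay, Fy0, hFy0, hpnear⟩ := aux_approx y n (x : X) x.2 δ hδ
  obtain ⟨bz, Fz0, hFz0, hqnear⟩ := aux_approx z n v hv δ hδ
  set p₀ : X := ∑ i ∈ Fy0, ay i • y i with hp₀def
  set q₀ : X := ∑ i ∈ Fz0, bz i • z i with hq₀def
  have hxnorm : ‖(x : X)‖ = ‖x‖ := rfl
  have hp₀norm : tt⁻¹ / 2 ≤ ‖p₀‖ := by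
    have h1 : ‖(x : X)‖ - ‖p₀‖ ≤ ‖(x : X) - p₀‖ := norm_sub_norm_le _ _
    rw [hxnorm] at h1
    linarith [hpnear]
  have hp₀pos : 0 < ‖p₀‖ := lt_of_lt_of_le (by positivity) hp₀norm
  have hp₀ne : p₀ ≠ 0 := norm_pos_iff.mp hp₀pos
  have hq₀norm : 1 / 2 ≤ ‖q₀‖ := by
    have h1 : ‖v‖ - ‖q₀‖ ≤ ‖v - q₀‖ := norm_sub_norm_le _ _
    rw [hvn] at h1
    linarith [hqnear]
  have hq₀ne : q₀ ≠ 0 := norm_pos_iff.mp (lt_of_lt_of_le (by norm_num) hq₀norm)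
  have hFy0ne : Fy0.Nonempty := by
    rcases Finset.eq_empty_or_nonempty Fy0 with h | h
    · exfalso; apply hp₀ne; rw [hp₀def, h, Finset.sum_empty]
    · exact h
  have hFz0ne : Fz0.Nonempty := by
    rcases Finset.eq_empty_or_nonempty Fz0 with h | h
    · exfalso; apply hq₀ne; rw [hq₀def, h, Finset.sum_empty]
    · exact h
  -- bound m
  set m : ℕ := (Fy0 ∪ Fz0).sup id + 1 with hmdef
  have hFybd : ∀ i ∈ Fy0, n ≤ i ∧ i < m := fun i hi =>
    ⟨hFy0 i hi, Nat.lt_succ_of_le (Finset.le_sup (f := id) (Finset.mem_union_left _ hi))⟩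
  have hFzbd : ∀ i ∈ Fz0, n ≤ i ∧ i < m := fun i hi =>
    ⟨hFz0 i hi, Nat.lt_succ_of_le (Finset.le_sup (f := id) (Finset.mem_union_right _ hi))⟩
  have hnm : n < m := by
    obtain ⟨i₀, hi₀⟩ := hFy0ne
    exact lt_of_le_of_lt (hFybd i₀ hi₀).1 (hFybd i₀ hi₀).2
  -- scalar
  set k : ℂ := ((‖p₀‖ : ℝ) : ℂ)⁻¹ with hkdef
  have hk0 : k ≠ 0 := inv_ne_zero (by exact_mod_cast hp₀pos.ne')
  have hknorm : ‖k‖ = ‖p₀‖⁻¹ := by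
    rw [hkdef, norm_inv, Complex.norm_real, Real.norm_eq_abs, abs_of_pos hp₀pos]
  have hsump : ∑ i ∈ Fy0, (k * ay i) • y i = k • p₀ := by
    rw [hp₀def, Finset.smul_sum]
    exact Finset.sum_congr rfl fun i _ => (smul_smul _ _ _).symm
  have hsumq : ∑ i ∈ Fz0, (k * bz i) • z i = k • q₀ := by
    rw [hq₀def, Finset.smul_sum]
    exact Finset.sum_congr rfl fun i _ => (smul_smul _ _ _).symm
  refine ⟨m, hnm, fun i => k * ay i, fun i => k * bz i, Fy0, Fz0, hFy0ne, hFz0ne, hFybd, hFzbd,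
    ?_, ?_, ?_⟩
  · rw [hsump, norm_smul, hknorm, inv_mul_cancel₀ hp₀pos.ne']
  · rw [hsumq]; exact smul_ne_zero hk0 hq₀ne
  · intro hp
    have hp₀mem : p₀ ∈ cSpan y :=
      Submodule.sum_mem _ fun i _ => Submodule.smul_mem _ _ (mem_cSpan y i)
    have hvecp : (⟨∑ i ∈ Fy0, (k * ay i) • y i, hp⟩ : cSpan y) = k • (⟨p₀, hp₀mem⟩ : cSpan y) := by
      apply Subtype.ext
      show (∑ i ∈ Fy0, (k * ay i) • y i) = ((k • (⟨p₀, hp₀mem⟩ : cSpan y) : cSpan y) : X)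
      rw [Submodule.coe_smul]
      exact hsump
    rw [hvecp, map_smul, hsumq, ← smul_sub, norm_smul, hknorm]
    -- bound ‖T ⟨p₀⟩ - q₀‖
    have hTu : T ((inclCLM (tailSpan_le y n)) x) = u := hxu
    have e1 : ‖T ⟨p₀, hp₀mem⟩ - u‖ ≤ tt * δ := by
      rw [← hTu, ← map_sub]
      have h2 : ‖(⟨p₀, hp₀mem⟩ : cSpan y) - (inclCLM (tailSpan_le y n)) x‖ = ‖p₀ - (x : X)‖ := rfl
      calc ‖T ((⟨p₀, hp₀mem⟩ : cSpan y) - (inclCLM (tailSpan_le y n)) x)‖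
          ≤ tt * ‖(⟨p₀, hp₀mem⟩ : cSpan y) - (inclCLM (tailSpan_le y n)) x‖ := T.le_opNorm _
        _ = tt * ‖p₀ - (x : X)‖ := by rw [h2]
        _ ≤ tt * δ := by
            apply mul_le_mul_of_nonneg_left _ hT0.le
            rw [norm_sub_rev]
            exact hpnear.le
    have e3 : ‖v - q₀‖ ≤ δ := hqnear.le
    have etotal : ‖T ⟨p₀, hp₀mem⟩ - q₀‖ ≤ tt * δ + ε₁ + δ := by
      have : T ⟨p₀, hp₀mem⟩ - q₀ = (T ⟨p₀, hp₀mem⟩ - u) + (u - v) + (v - q₀) := by abel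
      rw [this]
      calc ‖(T ⟨p₀, hp₀mem⟩ - u) + (u - v) + (v - q₀)‖
          ≤ ‖(T ⟨p₀, hp₀mem⟩ - u) + (u - v)‖ + ‖v - q₀‖ := norm_add_le _ _
        _ ≤ ‖T ⟨p₀, hp₀mem⟩ - u‖ + ‖u - v‖ + ‖v - q₀‖ := by
            linarith [norm_add_le (T ⟨p₀, hp₀mem⟩ - u) (u - v)]
        _ ≤ tt * δ + ε₁ + δ := by linarith
    have hkbd : ‖p₀‖⁻¹ ≤ 2 * tt := by
      have h1 : ‖p₀‖⁻¹ ≤ (tt⁻¹ / 2)⁻¹ := by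
        apply inv_anti₀ (by positivity) hp₀norm
      have h2 : (tt⁻¹ / 2)⁻¹ = 2 * tt := by field_simp
      rwa [h2] at h1
    calc ‖p₀‖⁻¹ * ‖T ⟨p₀, hp₀mem⟩ - q₀‖ ≤ (2 * tt) * (tt * δ + ε₁ + δ) := by
          apply mul_le_mul hkbd etotal (norm_nonneg _) (by positivity)
      _ = 2 * tt * (tt + 1) * δ + 2 * tt * ε₁ := by ring
      _ ≤ ε / 2 + ε / 2 := by
          have h1 : 2 * tt * (tt + 1) * δ ≤ 2 * tt * (tt + 1) * (ε / (4 * tt * (tt + 1))) :=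
            mul_le_mul_of_nonneg_left hδ3 (by positivity)
          have h2 : 2 * tt * (tt + 1) * (ε / (4 * tt * (tt + 1))) = ε / 2 := by
            field_simp; ring
          have h3 : 2 * tt * ε₁ = ε / 2 := by
            rw [hε₁def]; field_simp; ring
          linarith
      _ = ε := by ring

theorem statement9 {X : Type*} [NormedAddCommGroup X] [NormedSpace ℂ X] [CompleteSpace X]
    (hX : HI X) (y : ℕ → X) (hy : IsNBasic2 y)
    (T : cSpan y →L[ℂ] X) (c : ℝ) (hc : 0 < c)
    (hT : ∀ u : cSpan y, c * ‖u‖ ≤ ‖T u‖)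
    (z : ℕ → X) (hz : IsNBasic2 z) (hzblock : ∃ e : ℕ → X, IsNBasic2 e ∧ IsNBlockOf z e) :
    ∃ (y' : ℕ → X) (hy'mem : ∀ k, y' k ∈ cSpan y) (w : ℕ → X),
      IsNBlockOf y' y ∧ IsBlockOf w z ∧
      Summable (fun k => ‖T ⟨y' k, hy'mem k⟩ - w k‖) := by
  classical
  have key : ∀ n kk : ℕ, ∃ m : ℕ, n < m ∧ ∃ (a b : ℕ → ℂ) (Fy Fz : Finset ℕ),
      Fy.Nonempty ∧ Fz.Nonempty ∧ (∀ i ∈ Fy, n ≤ i ∧ i < m) ∧ (∀ i ∈ Fz, n ≤ i ∧ i < m) ∧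
      ‖∑ i ∈ Fy, a i • y i‖ = 1 ∧ (∑ i ∈ Fz, b i • z i) ≠ 0 ∧
      ∀ hp : (∑ i ∈ Fy, a i • y i) ∈ cSpan y,
        ‖T ⟨∑ i ∈ Fy, a i • y i, hp⟩ - ∑ i ∈ Fz, b i • z i‖ ≤ (1/2 : ℝ)^kk :=
    fun n kk => aux_key hX y hy T c hc hT z hz n ((1/2 : ℝ)^kk) (by positivity)
  choose m hm a b Fy Fz hFyne hFzne hFybd hFzbd hnorm hqne hest using key
  set nseq : ℕ → ℕ := fun kk => Nat.rec 0 (fun kk nk => m nk kk) kk with hnseqdef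
  have hnseqS : ∀ kk, nseq (kk+1) = m (nseq kk) kk := fun kk => rfl
  have hmono : StrictMono nseq := strictMono_nat_of_lt_succ (fun kk => by
    rw [hnseqS]; exact hm (nseq kk) kk)
  have hle : ∀ kk, kk ≤ nseq kk := fun kk => hmono.le_apply
  set FyK : ℕ → Finset ℕ := fun kk => Fy (nseq kk) kk with hFyKdef
  set FzK : ℕ → Finset ℕ := fun kk => Fz (nseq kk) kk with hFzKdef
  set aK : ℕ → ℕ → ℂ := fun kk => a (nseq kk) kk with haKdef
  set bK : ℕ → ℕ → ℂ := fun kk => b (nseq kk) kk with hbKdef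
  have hFyKbd : ∀ kk i, i ∈ FyK kk → nseq kk ≤ i ∧ i < nseq (kk+1) := fun kk i hi => by
    rw [hnseqS]; exact hFybd (nseq kk) kk i hi
  have hFzKbd : ∀ kk i, i ∈ FzK kk → nseq kk ≤ i ∧ i < nseq (kk+1) := fun kk i hi => by
    rw [hnseqS]; exact hFzbd (nseq kk) kk i hi
  have interval_disj : ∀ (F : ℕ → Finset ℕ),
      (∀ kk i, i ∈ F kk → nseq kk ≤ i ∧ i < nseq (kk+1)) →
      ∀ j kk i, i ∈ F j → i ∈ F kk → j = kk := by
    intro F hF j kk i hij hik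
    by_contra hne
    rcases Nat.lt_or_ge j kk with h | h
    · have h1 := (hF j i hij).2
      have h2 := (hF kk i hik).1
      have h3 : nseq (j+1) ≤ nseq kk := hmono.monotone (Nat.succ_le_of_lt h)
      omega
    · have hkj : kk < j := by omega
      have h1 := (hF kk i hik).2
      have h2 := (hF j i hij).1
      have h3 : nseq (kk+1) ≤ nseq j := hmono.monotone (Nat.succ_le_of_lt hkj)
      omega
  set aG : ℕ → ℂ := fun i => ∑ kk ∈ Finset.range (i+1), if i ∈ FyK kk then aK kk i else 0
    with haGdef
  set bG : ℕ → ℂ := fun i => ∑ kk ∈ Finset.range (i+1), if i ∈ FzK kk then bK kk i else 0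
    with hbGdef
  have haG : ∀ kk i, i ∈ FyK kk → aG i = aK kk i := by
    intro kk i hi
    have hmem : kk ∈ Finset.range (i+1) :=
      Finset.mem_range.2 (Nat.lt_succ_of_le (le_trans (hle kk) (hFyKbd kk i hi).1))
    show (∑ j ∈ Finset.range (i+1), if i ∈ FyK j then aK j i else 0) = aK kk i
    rw [Finset.sum_eq_single_of_mem kk hmem (fun j _ hjne => by
      rw [if_neg (fun hij => hjne (interval_disj FyK hFyKbd j kk i hij hi))]), if_pos hi]
  have hbG : ∀ kk i, i ∈ FzK kk → bG i = bK kk i := by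
    intro kk i hi
    have hmem : kk ∈ Finset.range (i+1) :=
      Finset.mem_range.2 (Nat.lt_succ_of_le (le_trans (hle kk) (hFzKbd kk i hi).1))
    show (∑ j ∈ Finset.range (i+1), if i ∈ FzK j then bK j i else 0) = bK kk i
    rw [Finset.sum_eq_single_of_mem kk hmem (fun j _ hjne => by
      rw [if_neg (fun hij => hjne (interval_disj FzK hFzKbd j kk i hij hi))]), if_pos hi]
  set y' : ℕ → X := fun kk => ∑ i ∈ FyK kk, aG i • y i with hy'def
  set w : ℕ → X := fun kk => ∑ i ∈ FzK kk, bG i • z i with hwdef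
  have hy'eq : ∀ kk, y' kk = ∑ i ∈ FyK kk, aK kk i • y i := fun kk =>
    Finset.sum_congr rfl (fun i hi => by rw [haG kk i hi])
  have hweq : ∀ kk, w kk = ∑ i ∈ FzK kk, bK kk i • z i := fun kk =>
    Finset.sum_congr rfl (fun i hi => by rw [hbG kk i hi])
  have hy'mem : ∀ kk, y' kk ∈ cSpan y := fun kk =>
    Submodule.sum_mem _ fun i _ => Submodule.smul_mem _ _ (mem_cSpan y i)
  have hy'norm : ∀ kk, ‖y' kk‖ = 1 := fun kk => by
    rw [hy'eq]; exact hnorm (nseq kk) kk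
  have hy'ne : ∀ kk, y' kk ≠ 0 := fun kk => by
    rw [← norm_pos_iff, hy'norm]; norm_num
  have hwne : ∀ kk, w kk ≠ 0 := fun kk => by
    rw [hweq]; exact hqne (nseq kk) kk
  refine ⟨y', hy'mem, w,
    ⟨⟨aG, FyK, fun kk => hFyne (nseq kk) kk, ?_, fun kk => rfl, hy'ne⟩, hy'norm⟩,
    ⟨bG, FzK, fun kk => hFzne (nseq kk) kk, ?_, fun kk => rfl, hwne⟩, ?_⟩
  · intro kk i j hi hj
    exact lt_of_lt_of_le (hFyKbd kk i hi).2 (hFyKbd (kk+1) j hj).1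
  · intro kk i j hi hj
    exact lt_of_lt_of_le (hFzKbd kk i hi).2 (hFzKbd (kk+1) j hj).1
  · have hbound : ∀ kk, ‖T ⟨y' kk, hy'mem kk⟩ - w kk‖ ≤ (1/2 : ℝ)^kk := by
      intro kk
      have hpm : (∑ i ∈ FyK kk, aK kk i • y i) ∈ cSpan y := hy'eq kk ▸ hy'mem kk
      have hvec : (⟨y' kk, hy'mem kk⟩ : cSpan y) = ⟨∑ i ∈ FyK kk, aK kk i • y i, hpm⟩ :=
        Subtype.ext (hy'eq kk)
      rw [hvec, hweq kk]
      exact hest (nseq kk) kk hpm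
    refine Summable.of_nonneg_of_le (fun kk => norm_nonneg _) hbound ?_
    exact summable_geometric_of_lt_one (by norm_num) (by norm_num)
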